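/- Let G be a nilpotent group of class at most two, generated by elements g₁,…,g_m, whose commutator subgroup [G,G] has cardinality at most R. Then the subgroup A = ⋂_{i=1}^m {x ∈ G : [x, g_i] = 1} is abelian and has index at most R^m in G. -/

import Mathlib

open scoped commutatorElement

/-- Let `G` be nilpotent of class at most two, generated by `g 0, …, g (m-1)`, with
commutator subgroup of cardinality at most `R`.  Then the subgroup
`A = ⋂ i, {x : ⁅x, g i⁆ = 1}` is abelian of index at most `R ^ m`. -/
theorem stmt_2 (G : Type*) [Group G] (hG : commutator G ≤ Subgroup.center G)
    (R m : ℕ) (g : Fin m → G) (hgen : Subgroup.closure (Set.range g) = ⊤)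
    (hR : Nat.card (commutator G) ≤ R) :
    ∃ A : Subgroup G, (A : Set G) = {x : G | ∀ i : Fin m, ⁅x, g i⁆ = 1} ∧
      (∀ a ∈ A, ∀ b ∈ A, a * b = b * a) ∧ A.index ≤ R ^ m := by
  have hcen : ∀ a b w : G, w * ⁅a, b⁆ = ⁅a, b⁆ * w := fun a b w =>
    (Subgroup.mem_center_iff.mp
      (hG (Subgroup.commutator_mem_commutator (Subgroup.mem_top a) (Subgroup.mem_top b)))) w
  have hmul_left : ∀ x y z : G, ⁅x * y, z⁆ = ⁅x, z⁆ * ⁅y, z⁆ := by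
    intro x y z
    calc ⁅x * y, z⁆ = x * ⁅y, z⁆ * (z * x⁻¹ * z⁻¹) := by group
      _ = ⁅y, z⁆ * x * (z * x⁻¹ * z⁻¹) := by rw [hcen y z x]
      _ = ⁅y, z⁆ * ⁅x, z⁆ := by group
      _ = ⁅x, z⁆ * ⁅y, z⁆ := hcen x z _
  have hmul_right : ∀ x y z : G, ⁅x, y * z⁆ = ⁅x, y⁆ * ⁅x, z⁆ := by
    intro x y z
    calc ⁅x, y * z⁆ = ⁅x, y⁆ * (y * ⁅x, z⁆ * y⁻¹) := by group
      _ = ⁅x, y⁆ * (⁅x, z⁆ * y * y⁻¹) := by rw [hcen x z y]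
      _ = ⁅x, y⁆ * ⁅x, z⁆ := by group
  let f : Fin m → (G →* G) := fun i =>
    { toFun := fun x => ⁅x, g i⁆
      map_one' := by group
      map_mul' := fun x y => hmul_left x y (g i) }
  refine ⟨⨅ i, (f i).ker, ?_, ?_, ?_⟩
  · ext x
    simp [Subgroup.mem_iInf, MonoidHom.mem_ker, f]
  · intro a ha b hb
    simp only [Subgroup.mem_iInf, MonoidHom.mem_ker] at ha
    have hcent : Subgroup.closure (Set.range g) ≤ Subgroup.centralizer {a} := by
      rw [Subgroup.closure_le]
      rintro _ ⟨i, rfl⟩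
      exact Subgroup.mem_centralizer_iff.mpr fun h hh => by
        rw [Set.mem_singleton_iff] at hh; subst hh
        exact commutatorElement_eq_one_iff_mul_comm.mp (ha i)
    have hb' : b ∈ Subgroup.centralizer {a} := hcent (hgen ▸ Subgroup.mem_top b)
    exact Subgroup.mem_centralizer_iff.mp hb' a rfl
  · by_cases hall : ∀ i, Finite ((f i).range)
    · -- if all ranges were forced finite but commutator could be infinite, rule that out
      have hle : commutator G ≤ ⨆ i, (f i).range := by
        rw [commutator_def, Subgroup.commutator_le]
        intro x _ y _
        let ψ : G →* G :=
          { toFun := fun w => ⁅x, w⁆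
            map_one' := by group
            map_mul' := fun u v => hmul_right x u v }
        have : Subgroup.closure (Set.range g) ≤ (⨆ i, (f i).range).comap ψ := by
          rw [Subgroup.closure_le]
          rintro _ ⟨i, rfl⟩
          exact Subgroup.mem_comap.mpr (Subgroup.mem_iSup_of_mem i ⟨x, rfl⟩)
        exact Subgroup.mem_comap.mp (this (hgen ▸ Subgroup.mem_top y))
      haveI : ∀ i, Finite ((f i).range) := hall
      have hcomm : Pairwise fun i j : Fin m =>
          ∀ x y : G, x ∈ (f i).range → y ∈ (f j).range → Commute x y := by
        intro i j _ x y hx hy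
        rcases hx with ⟨a, rfl⟩
        exact (hcen a (g i) y).symm
      have hfinsup : Finite (⨆ i, (f i).range : Subgroup G) := by
        rw [← Subgroup.noncommPiCoprod_range (hcomm := hcomm)]
        have hfr : (Set.range ⇑(Subgroup.noncommPiCoprod hcomm)).Finite := Set.finite_range _
        have := hfr.to_subtype
        rw [← MonoidHom.coe_range] at hfr
        exact hfr.to_subtype
      have hfc : Finite (commutator G) :=
        Finite.of_injective _ (Subgroup.inclusion_injective hle)
      have hcard : ∀ i, ((f i).ker).index ≤ R := by
        intro i
        rw [Subgroup.index_ker]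
        have hri : (f i).range ≤ commutator G := by
          rintro _ ⟨a, rfl⟩
          exact Subgroup.commutator_mem_commutator (Subgroup.mem_top a) (Subgroup.mem_top (g i))
        calc Nat.card ((f i).range) ≤ Nat.card (commutator G) :=
              Nat.card_le_card_of_injective _ (Subgroup.inclusion_injective hri)
          _ ≤ R := hR
      calc (⨅ i, (f i).ker).index ≤ ∏ i, ((f i).ker).index := Subgroup.index_iInf_le _
        _ ≤ ∏ _i : Fin m, R := Finset.prod_le_prod' fun i _ => hcard i
        _ = R ^ m := by simp
    · push_neg at hall
      obtain ⟨i, hi⟩ := hall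
      have h0 : ((f i).ker).index = 0 := by
        rw [Subgroup.index_ker]
        haveI := hi
        exact Nat.card_eq_zero_of_infinite
      have : (⨅ j, (f j).ker).index = 0 :=
        zero_dvd_iff.mp (h0 ▸ Subgroup.index_dvd_of_le (iInf_le _ i))
      simp [this]
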